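/- arXiv:2602.01458 — 7 statements merged into one kernel-verified Lean document; each statement's English description precedes it below -/
import Mathlib

section
/- In the Samelson setup, let α, γ ∈ Δ⁺ be positive roots of the simple ideal 𝔤ᵢ with α + γ ∈ Δ, and set β := −α − γ (a negative root). Then for all X ∈ 𝔤_γ, Y ∈ 𝔤_α, Z ∈ 𝔤_β one has Φ(X, Y, Z) = −λᵢ (c_{α+γ} − c_γ) B([X,Y], Z). In particular, if the constants satisfy the pluriclosed relation c_{α+γ} = c_α + c_γ − 1, then Φ(X, Y, Z) = −λᵢ (c_α − 1) B([X,Y], Z). -/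
/-- The Samelson setup: a finite-dimensional complex semisimple Lie algebra `L` with a
Cartan subalgebra `H`, root system `Δ` (with values in an additive group `R` of weights),
a choice of positive roots `pos` with simple roots, root spaces, the decomposition into
simple ideals, the left-invariant metric `G` determined by constants `lam i > 0` and
`c α > 0`, a Samelson complex structure `J`, and the Killing form `killingForm ℂ L`. -/
structure SamelsonSetup (R L : Type) [AddCommGroup R] [LieRing L] [LieAlgebra ℂ L] where
  finiteDim : FiniteDimensional ℂ L
  semisimple : LieAlgebra.IsSemisimple ℂ L
  /-- the Cartan subalgebra 𝔥 -/
  H : LieSubalgebra ℂ L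
  cartan : H.IsCartanSubalgebra
  /-- the root system Δ ⊆ 𝔥* -/
  Δ : Set R
  /-- the positive roots Δ⁺ -/
  pos : Set R
  Δ_finite : Δ.Finite
  pos_subset : pos ⊆ Δ
  zero_not_mem : (0 : R) ∉ Δ
  neg_mem : ∀ a ∈ Δ, -a ∈ Δ
  pos_or_neg : ∀ a ∈ Δ, a ∈ pos ∨ -a ∈ pos
  not_pos_and_neg : ∀ a ∈ pos, -a ∉ pos
  /-- the number of simple roots (= rank) -/
  r : ℕ
  /-- the simple roots α₁, …, α_r -/
  simple : Fin r → R
  simple_mem : ∀ j, simple j ∈ pos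
  /-- the coefficients of a positive root as an ℕ-linear combination of simple roots -/
  coeff : R → Fin r → ℕ
  coeff_spec : ∀ a ∈ pos, a = ∑ j, coeff a j • simple j
  coeff_unique : ∀ a ∈ pos, ∀ k : Fin r → ℕ, a = ∑ j, k j • simple j → k = coeff a
  descent : ∀ a ∈ pos, (∀ j, a ≠ simple j) → ∃ j, ∃ b ∈ pos, a = simple j + b
  /-- the root spaces 𝔤_α (with 𝔤₀ = 𝔥) -/
  rootSpace : R → Submodule ℂ L
  rootSpace_zero : rootSpace 0 = H.toSubmodule
  rootSpace_eq_bot : ∀ a : R, a ≠ 0 → a ∉ Δ → rootSpace a = ⊥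
  bracket_mem : ∀ (a b : R), ∀ X ∈ rootSpace a, ∀ Y ∈ rootSpace b, ⁅X, Y⁆ ∈ rootSpace (a + b)
  rootSpace_sup : (⨆ a ∈ insert (0 : R) Δ, rootSpace a) = ⊤
  rootSpace_indep : iSupIndep fun a : ↥(insert (0 : R) Δ) => rootSpace a.1
  /-- the number of simple ideals -/
  s : ℕ
  /-- the simple ideals 𝔤₁, …, 𝔤_s -/
  ideal : Fin s → LieIdeal ℂ L
  ideal_simple : ∀ i, LieAlgebra.IsSimple ℂ (ideal i)
  ideal_sup : (⨆ i, ideal i) = ⊤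
  ideal_indep : iSupIndep ideal
  /-- the simple ideal a root belongs to -/
  idealOf : R → Fin s
  idealOf_neg : ∀ a, idealOf (-a) = idealOf a
  rootSpace_le_ideal : ∀ a ∈ Δ, ∀ X ∈ rootSpace a, X ∈ ideal (idealOf a)
  /-- the positive constants λᵢ -/
  lam : Fin s → ℝ
  lam_pos : ∀ i, 0 < lam i
  /-- the positive constants c_α, with c_{-α} = c_α -/
  c : R → ℝ
  c_pos : ∀ a ∈ Δ, 0 < c a
  c_neg : ∀ a : R, c (-a) = c a
  /-- the metric g -/
  G : LinearMap.BilinForm ℂ L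
  G_symm : ∀ X Y, G X Y = G Y X
  G_H : ∀ i : Fin s, ∀ X Y : L, X ∈ H → X ∈ ideal i → Y ∈ H → Y ∈ ideal i →
    G X Y = -(lam i : ℂ) * killingForm ℂ L X Y
  G_root : ∀ a ∈ Δ, ∀ X ∈ rootSpace a, ∀ Y ∈ rootSpace (-a),
    G X Y = -(lam (idealOf a) : ℂ) * (c a : ℂ) * killingForm ℂ L X Y
  G_roots_ne : ∀ a ∈ Δ, ∀ b ∈ Δ, a + b ≠ 0 →
    ∀ X ∈ rootSpace a, ∀ Y ∈ rootSpace b, G X Y = 0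
  G_H_root : ∀ a ∈ Δ, ∀ X ∈ H, ∀ Y ∈ rootSpace a, G X Y = 0
  G_ideal_ne : ∀ i j : Fin s, i ≠ j → ∀ X ∈ ideal i, ∀ Y ∈ ideal j, G X Y = 0
  /-- the Samelson complex structure J -/
  J : L →ₗ[ℂ] L
  J_H : ∀ X ∈ H, J X ∈ H
  J_J_H : ∀ X ∈ H, J (J X) = -X
  J_pos : ∀ a ∈ pos, ∀ X ∈ rootSpace a, J X = Complex.I • X
  J_neg : ∀ a ∈ pos, ∀ X ∈ rootSpace (-a), J X = -(Complex.I • X)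

namespace SamelsonSetup

variable {R L : Type} [AddCommGroup R] [LieRing L] [LieAlgebra ℂ L]

/-- The Nomizu form of the Bismut connection:
Φ(X,Y,Z) = ½( g([X,Y],Z) + g([Z,X],Y) − g([Y,Z],X)
            − g([JX,JY],Z) − g([JZ,JX],Y) − g([JY,JZ],X) ). -/
noncomputable def Phi (S : SamelsonSetup R L) (X Y Z : L) : ℂ :=
  (1 / 2 : ℂ) * (S.G ⁅X, Y⁆ Z + S.G ⁅Z, X⁆ Y - S.G ⁅Y, Z⁆ X
    - S.G ⁅S.J X, S.J Y⁆ Z - S.G ⁅S.J Z, S.J X⁆ Y - S.G ⁅S.J Y, S.J Z⁆ X)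

/-- The Bismut torsion: T(X,Y,Z) = −g([JX,JY],Z) − g([JY,JZ],X) − g([JZ,JX],Y). -/
noncomputable def T (S : SamelsonSetup R L) (X Y Z : L) : ℂ :=
  -S.G ⁅S.J X, S.J Y⁆ Z - S.G ⁅S.J Y, S.J Z⁆ X - S.G ⁅S.J Z, S.J X⁆ Y

end SamelsonSetup

/-- If α, γ ∈ Δ⁺ and α + γ ∈ Δ, then α + γ ∈ Δ⁺. -/
lemma SamelsonSetup.sum_pos_mem {R L : Type} [AddCommGroup R] [LieRing L] [LieAlgebra ℂ L]
    (S : SamelsonSetup R L) {α γ : R} (hα : α ∈ S.pos) (hγ : γ ∈ S.pos)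
    (hαγ : α + γ ∈ S.Δ) : α + γ ∈ S.pos := by
  rcases S.pos_or_neg _ hαγ with h | h
  · exact h
  · exfalso
    have hk := S.coeff_spec _ h
    have ha := S.coeff_spec _ hα
    have hg := S.coeff_spec _ hγ
    have key : α = ∑ j, (S.coeff α j + (S.coeff α j + S.coeff γ j + S.coeff (-(α+γ)) j))
        • S.simple j := by
      have hsum : (∑ j, (S.coeff α j + (S.coeff α j + S.coeff γ j + S.coeff (-(α+γ)) j))
            • S.simple j)
          = (∑ j, S.coeff α j • S.simple j) + ((∑ j, S.coeff α j • S.simple j)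
            + (∑ j, S.coeff γ j • S.simple j) + (∑ j, S.coeff (-(α+γ)) j • S.simple j)) := by
        rw [← Finset.sum_add_distrib, ← Finset.sum_add_distrib, ← Finset.sum_add_distrib]
        exact Finset.sum_congr rfl fun j _ => by rw [← add_smul, ← add_smul, ← add_smul]
      rw [hsum, ← ha, ← hg, ← hk]
      abel
    have hu := S.coeff_unique _ hα _ key
    have h0 : ∀ j, S.coeff γ j = 0 := fun j => by
      have := congrFun hu j; omega
    have hγ0 : γ = 0 := by
      rw [hg]
      exact Finset.sum_eq_zero fun j _ => by rw [h0 j, zero_smul]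
    exact S.zero_not_mem (hγ0 ▸ S.pos_subset hγ)

/-- For positive roots α, γ ∈ Δ⁺ of the simple ideal 𝔤ᵢ with α + γ ∈ Δ and
β := −α−γ, one has Φ(X, Y, Z) = −λᵢ (c_{α+γ} − c_γ) B([X,Y], Z) for all
X ∈ 𝔤_γ, Y ∈ 𝔤_α, Z ∈ 𝔤_β; in particular, if c_{α+γ} = c_α + c_γ − 1 then
Φ(X, Y, Z) = −λᵢ (c_α − 1) B([X,Y], Z). -/
theorem nomizu_formula_pos_pos_neg {R L : Type} [AddCommGroup R] [LieRing L] [LieAlgebra ℂ L]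
    (S : SamelsonSetup R L) (i : Fin S.s) (α γ : R) (hα : α ∈ S.pos) (hγ : γ ∈ S.pos)
    (hαi : S.idealOf α = i) (hγi : S.idealOf γ = i) (hαγ : α + γ ∈ S.Δ)
    (X Y Z : L) (hX : X ∈ S.rootSpace γ) (hY : Y ∈ S.rootSpace α)
    (hZ : Z ∈ S.rootSpace (-(α + γ))) :
    S.Phi X Y Z
      = -(S.lam i : ℂ) * ((S.c (α + γ) : ℂ) - (S.c γ : ℂ)) * killingForm ℂ L ⁅X, Y⁆ Z ∧
    (S.c (α + γ) = S.c α + S.c γ - 1 →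
      S.Phi X Y Z = -(S.lam i : ℂ) * ((S.c α : ℂ) - 1) * killingForm ℂ L ⁅X, Y⁆ Z) := by
  have hpos : α + γ ∈ S.pos := S.sum_pos_mem hα hγ hαγ
  have hXY : ⁅X, Y⁆ ∈ S.rootSpace (α + γ) := by
    have h := S.bracket_mem γ α X hX Y hY
    rwa [add_comm γ α] at h
  have hYZ : ⁅Y, Z⁆ ∈ S.rootSpace (-γ) := by
    have h := S.bracket_mem α (-(α+γ)) Y hY Z hZ
    have he : α + -(α+γ) = -γ := by abel
    rwa [he] at h
  have hA : S.G ⁅X, Y⁆ Z = -(S.lam i : ℂ) * (S.c (α+γ) : ℂ) * killingForm ℂ L ⁅X, Y⁆ Z := by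
    by_cases hz : (⁅X, Y⁆ : L) = 0
    · simp [hz]
    · have hi : S.idealOf (α + γ) = i := by
        by_contra hne
        have h1 : ⁅X, Y⁆ ∈ S.ideal (S.idealOf (α + γ)) := S.rootSpace_le_ideal _ hαγ _ hXY
        have hYi : Y ∈ S.ideal i := hαi ▸ S.rootSpace_le_ideal _ (S.pos_subset hα) _ hY
        have h2 : ⁅X, Y⁆ ∈ S.ideal i := (S.ideal i).lie_mem hYi
        have hd : Disjoint (S.ideal (S.idealOf (α+γ))) (S.ideal i) :=
          S.ideal_indep.pairwiseDisjoint hne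
        have hmem : ⁅X, Y⁆ ∈ (S.ideal (S.idealOf (α+γ)) ⊓ S.ideal i : LieIdeal ℂ L) :=
          ⟨h1, h2⟩
        exact hz (by simpa using hd.le_bot hmem)
      rw [S.G_root (α+γ) hαγ _ hXY _ hZ, hi]
  have hC : S.G ⁅Y, Z⁆ X = -(S.lam i : ℂ) * (S.c γ : ℂ) * killingForm ℂ L ⁅X, Y⁆ Z := by
    have hnegγ : -γ ∈ S.Δ := S.neg_mem γ (S.pos_subset hγ)
    have hX' : X ∈ S.rootSpace (-(-γ)) := by rwa [neg_neg]
    have h := S.G_root (-γ) hnegγ _ hYZ _ hX'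
    rw [S.idealOf_neg, hγi, S.c_neg] at h
    rw [h]
    congr 1
    rw [show killingForm ℂ L ⁅X, Y⁆ Z = killingForm ℂ L X ⁅Y, Z⁆ from
      LieModule.traceForm_apply_lie_apply ℂ L L X Y Z]
    exact LieModule.traceForm_comm ℂ L L ⁅Y, Z⁆ X
  have hJX : S.J X = Complex.I • X := S.J_pos γ hγ X hX
  have hJY : S.J Y = Complex.I • Y := S.J_pos α hα Y hY
  have hJZ : S.J Z = -(Complex.I • Z) := S.J_neg (α+γ) hpos Z hZ
  have e1 : S.G ⁅S.J X, S.J Y⁆ Z = - S.G ⁅X, Y⁆ Z := by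
    rw [hJX, hJY, smul_lie, lie_smul, smul_smul, Complex.I_mul_I, map_smul,
      LinearMap.smul_apply, smul_eq_mul]
    ring
  have e2 : S.G ⁅S.J Z, S.J X⁆ Y = S.G ⁅Z, X⁆ Y := by
    rw [hJZ, hJX, neg_lie, lie_smul, smul_lie, smul_smul, Complex.I_mul_I, map_neg,
      map_smul, LinearMap.neg_apply, LinearMap.smul_apply, smul_eq_mul]
    ring
  have e3 : S.G ⁅S.J Y, S.J Z⁆ X = S.G ⁅Y, Z⁆ X := by
    rw [hJY, hJZ, smul_lie, lie_neg, lie_smul, smul_neg, smul_smul, Complex.I_mul_I,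
      map_neg, map_smul, LinearMap.neg_apply, LinearMap.smul_apply, smul_eq_mul]
    ring
  have hPhi : S.Phi X Y Z
      = -(S.lam i : ℂ) * ((S.c (α + γ) : ℂ) - (S.c γ : ℂ)) * killingForm ℂ L ⁅X, Y⁆ Z := by
    rw [SamelsonSetup.Phi, e1, e2, e3, hA, hC]
    ring
  refine ⟨hPhi, fun hc => ?_⟩
  rw [hPhi]
  have hcc : (S.c (α + γ) : ℂ) - (S.c γ : ℂ) = (S.c α : ℂ) - 1 := by
    rw [hc]; push_cast; ring
  rw [hcc]
end

section
/- In the Samelson setup, let α ∈ Δ⁺ be a positive root and β a negative root (−β ∈ Δ⁺) of the simple ideal 𝔤ᵢ such that α + β ∈ Δ⁺, and set γ := −α − β (a negative root). Then for all X ∈ 𝔤_γ, Y ∈ 𝔤_α, Z ∈ 𝔤_β one has Φ(X, Y, Z) = −λᵢ (c_α − c_{α+β}) B([X,Y], Z). -/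
/-- For a positive root α ∈ Δ⁺ and a negative root β (−β ∈ Δ⁺) of the simple
ideal 𝔤ᵢ with α + β ∈ Δ⁺, setting γ := −α−β, one has
Φ(X, Y, Z) = −λᵢ (c_α − c_{α+β}) B([X,Y], Z) for all X ∈ 𝔤_γ, Y ∈ 𝔤_α, Z ∈ 𝔤_β. -/
theorem nomizu_formula_pos_neg {R L : Type} [AddCommGroup R] [LieRing L] [LieAlgebra ℂ L]
    (S : SamelsonSetup R L) (i : Fin S.s) (α β : R) (hα : α ∈ S.pos) (hβ : -β ∈ S.pos)
    (hαi : S.idealOf α = i) (hβi : S.idealOf β = i) (hαβ : α + β ∈ S.pos)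
    (X Y Z : L) (hX : X ∈ S.rootSpace (-(α + β))) (hY : Y ∈ S.rootSpace α)
    (hZ : Z ∈ S.rootSpace β) :
    S.Phi X Y Z
      = -(S.lam i : ℂ) * ((S.c α : ℂ) - (S.c (α + β) : ℂ)) * killingForm ℂ L ⁅X, Y⁆ Z := by
  classical
  -- basic root memberships
  have hΔα : α ∈ S.Δ := S.pos_subset hα
  have hΔnβ : -β ∈ S.Δ := S.pos_subset hβ
  have hΔαβ : α + β ∈ S.Δ := S.pos_subset hαβ
  have hΔnαβ : -(α + β) ∈ S.Δ := S.neg_mem _ hΔαβ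
  have hΔnα : -α ∈ S.Δ := S.neg_mem _ hΔα
  -- J values
  have hJY : S.J Y = Complex.I • Y := S.J_pos α hα Y hY
  have hJZ : S.J Z = -(Complex.I • Z) := S.J_neg (-β) hβ Z (by simpa using hZ)
  have hJX : S.J X = -(Complex.I • X) := S.J_neg (α + β) hαβ X hX
  -- bracket memberships
  have hXY : ⁅X, Y⁆ ∈ S.rootSpace (-β) := by
    have h := S.bracket_mem _ _ X hX Y hY
    rwa [show (-(α + β) + α) = -β by abel] at h
  have hZX : ⁅Z, X⁆ ∈ S.rootSpace (-α) := by
    have h := S.bracket_mem _ _ Z hZ X hX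
    rwa [show (β + -(α + β)) = -α by abel] at h
  have hYZ : ⁅Y, Z⁆ ∈ S.rootSpace (α + β) := S.bracket_mem _ _ Y hY Z hZ
  -- killing form cyclic identities
  have hB2 : killingForm ℂ L ⁅Z, X⁆ Y = killingForm ℂ L ⁅X, Y⁆ Z := by
    rw [LieModule.traceForm_apply_lie_apply, LieModule.traceForm_comm]
  have hB3 : killingForm ℂ L ⁅Y, Z⁆ X = killingForm ℂ L ⁅X, Y⁆ Z := by
    rw [LieModule.traceForm_apply_lie_apply, LieModule.traceForm_comm, ← hB2,
      LieModule.traceForm_apply_lie_apply, LieModule.traceForm_comm]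
  -- metric values
  have g1 : S.G ⁅X, Y⁆ Z
      = -(S.lam i : ℂ) * (S.c β : ℂ) * killingForm ℂ L ⁅X, Y⁆ Z := by
    have h := S.G_root (-β) hΔnβ ⁅X, Y⁆ hXY Z (by simpa using hZ)
    rwa [S.idealOf_neg, hβi, S.c_neg] at h
  have g2 : S.G ⁅Z, X⁆ Y
      = -(S.lam i : ℂ) * (S.c α : ℂ) * killingForm ℂ L ⁅Z, X⁆ Y := by
    have h := S.G_root (-α) hΔnα ⁅Z, X⁆ hZX Y (by simpa using hY)
    rwa [S.idealOf_neg, hαi, S.c_neg] at h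
  set j := S.idealOf (α + β) with hj
  have g3 : S.G ⁅Y, Z⁆ X
      = -(S.lam j : ℂ) * (S.c (α + β) : ℂ) * killingForm ℂ L ⁅Y, Z⁆ X :=
    S.G_root (α + β) hΔαβ ⁅Y, Z⁆ hYZ X hX
  -- simplify Phi using the complex structure
  have hPhi : S.Phi X Y Z = S.G ⁅Z, X⁆ Y - S.G ⁅Y, Z⁆ X := by
    rw [SamelsonSetup.Phi, hJX, hJY, hJZ]
    simp only [neg_lie, lie_neg, smul_lie, lie_smul, smul_neg, smul_smul, Complex.I_mul_I,
      neg_smul, one_smul, neg_neg, map_neg, LinearMap.neg_apply]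
    ring
  by_cases hji : j = i
  · rw [hPhi, g2, g3, hB2, hB3, hji]
    ring
  · -- the bracket ⁅Y, Z⁆ lies in two distinct simple ideals, hence vanishes
    have hYi : Y ∈ S.ideal i := by
      have := S.rootSpace_le_ideal α hΔα Y hY; rwa [hαi] at this
    have hYZi : ⁅Y, Z⁆ ∈ S.ideal i := by
      have h : ⁅Z, Y⁆ ∈ S.ideal i := (S.ideal i).lie_mem hYi
      have : -⁅Z, Y⁆ ∈ S.ideal i := neg_mem h
      rwa [lie_skew] at this
    have hYZj : ⁅Y, Z⁆ ∈ S.ideal j := S.rootSpace_le_ideal (α + β) hΔαβ ⁅Y, Z⁆ hYZ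
    have hdisj : Disjoint (S.ideal j) (S.ideal i) :=
      S.ideal_indep.pairwiseDisjoint hji
    have hzero : ⁅Y, Z⁆ = 0 := by
      have := hdisj.le_bot ((LieSubmodule.mem_inf _ _ _).mpr ⟨hYZj, hYZi⟩)
      simpa using this
    have hB0 : killingForm ℂ L ⁅X, Y⁆ Z = 0 := by
      rw [← hB3, hzero]; simp
    rw [hPhi, g2, g3, hB2, hB3, hB0]
    ring
end

section
/- In the Samelson setup, assume the constants are pluriclosed, i.e. c_{α+β} = c_α + c_β − 1 for all α, β ∈ Δ⁺ with α + β ∈ Δ⁺, and let Δ_{I_max} denote the set of positive roots that are ℕ-linear combinations of simple roots αⱼ with c_{αⱼ} = 1. Then for every α ∈ Δ_{I_max}, every X ∈ 𝔤, every Y ∈ 𝔤_α ⊕ 𝔤_{−α}, and every Z which lies either in 𝔥 or in a root space 𝔤_β with β ∈ Δ and β ∉ {α, −α}, one has Φ(X, Y, Z) = 0. (Consequently each subspace 𝔤_α ⊕ 𝔤_{−α} with α ∈ Δ_{I_max} is invariant under the Bismut holonomy, giving the holonomy splitting 𝔤 = 𝔱 ⊕ ⨁_{α ∈ Δ_{I_max}}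 𝔤_α^ℝ ⊕ (Σ_{α ∈ Δ⁺ \ Δ_{I_max}} 𝔤_α^ℝ).) -/
namespace SamelsonSetup

variable {R L : Type} [AddCommGroup R] [LieRing L] [LieAlgebra ℂ L] (S : SamelsonSetup R L)

lemma eq_zero_of_mem_rs {a : R} (ha0 : a ≠ 0) (ha : a ∉ S.Δ) {U : L}
    (hU : U ∈ S.rootSpace a) : U = 0 := by
  rw [S.rootSpace_eq_bot a ha0 ha] at hU; simpa using hU

lemma J_mem {a : R} {U : L} (hU : U ∈ S.rootSpace a) : S.J U ∈ S.rootSpace a := by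
  by_cases ha0 : a = 0
  · subst ha0; rw [S.rootSpace_zero] at hU ⊢; exact S.J_H U hU
  by_cases ha : a ∈ S.Δ
  · rcases S.pos_or_neg a ha with h | h
    · rw [S.J_pos a h U hU]; exact Submodule.smul_mem _ _ hU
    · rw [S.J_neg (-a) h U (by rwa [neg_neg])]
      exact Submodule.neg_mem _ (Submodule.smul_mem _ _ hU)
  · rw [S.eq_zero_of_mem_rs ha0 ha hU]; simp

lemma G_zero {a b : R} (h : a + b ≠ 0) {U V : L} (hU : U ∈ S.rootSpace a)
    (hV : V ∈ S.rootSpace b) : S.G U V = 0 := by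
  by_cases ha0 : a = 0
  · subst ha0
    by_cases hb : b ∈ S.Δ
    · rw [S.rootSpace_zero] at hU
      exact S.G_H_root b hb U hU V hV
    · rw [S.eq_zero_of_mem_rs (by simpa using h) hb hV]; simp
  by_cases ha : a ∈ S.Δ
  · by_cases hb0 : b = 0
    · subst hb0
      rw [S.rootSpace_zero] at hV
      rw [S.G_symm]
      exact S.G_H_root a ha V hV U hU
    by_cases hb : b ∈ S.Δ
    · exact S.G_roots_ne a ha b hb h U hU V hV
    · rw [S.eq_zero_of_mem_rs hb0 hb hV]; simp
  · rw [S.eq_zero_of_mem_rs ha0 ha hU]; simp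

lemma Phi_zero_left (Y Z : L) : S.Phi 0 Y Z = 0 := by
  simp [SamelsonSetup.Phi]

lemma Phi_add_left (X X' Y Z : L) :
    S.Phi (X + X') Y Z = S.Phi X Y Z + S.Phi X' Y Z := by
  simp only [SamelsonSetup.Phi, add_lie, lie_add, map_add, LinearMap.add_apply]
  ring

lemma Phi_add_mid (X Y Y' Z : L) :
    S.Phi X (Y + Y') Z = S.Phi X Y Z + S.Phi X Y' Z := by
  simp only [SamelsonSetup.Phi, add_lie, lie_add, map_add, LinearMap.add_apply]
  ring

lemma Phi_zero_of_ne {a b d : R} (h : a + b + d ≠ 0) {X Y Z : L}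
    (hX : X ∈ S.rootSpace a) (hY : Y ∈ S.rootSpace b) (hZ : Z ∈ S.rootSpace d) :
    S.Phi X Y Z = 0 := by
  have hJX := S.J_mem hX
  have hJY := S.J_mem hY
  have hJZ := S.J_mem hZ
  have h1 : a + b + d ≠ 0 := h
  have h2 : (d + a) + b ≠ 0 := by intro hc; exact h (by rw [← hc]; abel)
  have h3 : (b + d) + a ≠ 0 := by intro hc; exact h (by rw [← hc]; abel)
  rw [SamelsonSetup.Phi]
  rw [S.G_zero h1 (S.bracket_mem a b X hX Y hY) hZ,
      S.G_zero h2 (S.bracket_mem d a Z hZ X hX) hY,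
      S.G_zero h3 (S.bracket_mem b d Y hY Z hZ) hX,
      S.G_zero h1 (S.bracket_mem a b _ hJX _ hJY) hZ,
      S.G_zero h2 (S.bracket_mem d a _ hJZ _ hJX) hY,
      S.G_zero h3 (S.bracket_mem b d _ hJY _ hJZ) hX]
  ring

lemma no_two {a b : R} (ha : a ∈ S.pos) (hb : b ∈ S.pos) : a + b ≠ 0 := by
  intro h
  exact S.not_pos_and_neg a ha ((neg_eq_of_add_eq_zero_right h) ▸ hb)

lemma no_three {a b d : R} (ha : a ∈ S.pos) (hb : b ∈ S.pos) (hd : d ∈ S.pos) :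
    a + b + d ≠ 0 := by
  intro h
  set ka := S.coeff a with hka
  set kb := S.coeff b with hkb
  set kd := S.coeff d with hkd
  have ha' := S.coeff_spec a ha
  have hb' := S.coeff_spec b hb
  have hd' := S.coeff_spec d hd
  rw [← hka] at ha'; rw [← hkb] at hb'; rw [← hkd] at hd'
  have key : (fun j => 2 * ka j + kb j + kd j) = ka := by
    rw [hka]
    apply S.coeff_unique a ha
    calc a = a + (a + b + d) := by rw [h]; abel
    _ = ∑ j, (2 * ka j + kb j + kd j) • S.simple j := by
        nth_rewrite 1 [ha']; nth_rewrite 1 [ha']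
        rw [hb', hd', ← Finset.sum_add_distrib, ← Finset.sum_add_distrib,
          ← Finset.sum_add_distrib]
        apply Finset.sum_congr rfl
        intro j _
        rw [add_smul, add_smul, two_mul, add_smul]
        abel
  have hz : ∀ j, ka j = 0 := by
    intro j
    have := congrFun key j
    omega
  have : a = 0 := by
    rw [ha']
    simp [hz]
  exact S.zero_not_mem (this ▸ S.pos_subset ha)

lemma coeff_add {a b : R} (ha : a ∈ S.pos) (hb : b ∈ S.pos) (hab : a + b ∈ S.pos) :
    (fun j => S.coeff a j + S.coeff b j) = S.coeff (a + b) := by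
  set ka := S.coeff a with hka
  set kb := S.coeff b with hkb
  have ha' := S.coeff_spec a ha
  have hb' := S.coeff_spec b hb
  rw [← hka] at ha'; rw [← hkb] at hb'
  apply S.coeff_unique _ hab
  nth_rewrite 1 [ha']; nth_rewrite 1 [hb']
  rw [← Finset.sum_add_distrib]
  exact Finset.sum_congr rfl fun j _ => (add_smul _ _ _).symm

lemma coeff_simple (j : Fin S.r) : S.coeff (S.simple j) = Pi.single j 1 := by
  refine (S.coeff_unique _ (S.simple_mem j) (Pi.single j 1) ?_).symm
  rw [Finset.sum_eq_single j]
  · simp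
  · intro k _ hk; rw [Pi.single_eq_of_ne hk]; simp
  · simp

/-- membership in Δ_{I_max} -/
def Imax (S : SamelsonSetup R L) (a : R) : Prop :=
  ∀ j, S.coeff a j ≠ 0 → S.c (S.simple j) = 1

lemma Imax_left {a b : R} (ha : a ∈ S.pos) (hb : b ∈ S.pos) (hab : a + b ∈ S.pos)
    (h : S.Imax (a + b)) : S.Imax a := by
  intro j hj
  apply h j
  have := congrFun (S.coeff_add ha hb hab) j
  omega

lemma Imax_right {a b : R} (ha : a ∈ S.pos) (hb : b ∈ S.pos) (hab : a + b ∈ S.pos)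
    (h : S.Imax (a + b)) : S.Imax b := by
  intro j hj
  apply h j
  have := congrFun (S.coeff_add ha hb hab) j
  omega

lemma c_one (hpluri : ∀ a ∈ S.pos, ∀ b ∈ S.pos, a + b ∈ S.pos → S.c (a + b) = S.c a + S.c b - 1) :
    ∀ n, ∀ a ∈ S.pos, (∑ j, S.coeff a j) = n → S.Imax a → S.c a = 1 := by
  intro n
  induction n using Nat.strong_induction_on with
  | _ n ih =>
    intro a ha hn hImax
    by_cases hsimple : ∃ j, a = S.simple j
    · obtain ⟨j, rfl⟩ := hsimple
      apply hImax j
      rw [S.coeff_simple]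
      simp
    · push_neg at hsimple
      obtain ⟨j, b, hb, hab⟩ := S.descent a ha hsimple
      have hcadd := S.coeff_add (S.simple_mem j) hb (hab ▸ ha)
      have hsumb : (∑ k, S.coeff b k) < n := by
        rw [← hn, hab, ← hcadd]
        rw [Finset.sum_add_distrib]
        have : (∑ k, S.coeff (S.simple j) k) = 1 := by
          rw [S.coeff_simple]
          simp
        omega
      have hImaxb : S.Imax b := by
        rw [hab] at hImax
        exact S.Imax_right (S.simple_mem j) hb (hab ▸ ha) hImax
      have hcb := ih _ hsumb b hb rfl hImaxb
      have hcs : S.c (S.simple j) = 1 := by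
        rw [hab] at hImax
        apply hImax j
        rw [← hcadd, S.coeff_simple]
        simp
      rw [hab, hpluri _ (S.simple_mem j) _ hb (hab ▸ ha), hcs, hcb]
      ring

lemma bracket_ideal_zero {i j : Fin S.s} (hij : i ≠ j) {U V : L}
    (hU : U ∈ S.ideal i) (hV : V ∈ S.ideal j) : ⁅U, V⁆ = 0 := by
  have h1 : ⁅U, V⁆ ∈ S.ideal j := lie_mem_right ℂ L (S.ideal j) U V hV
  have h2 : ⁅U, V⁆ ∈ S.ideal i := lie_mem_left ℂ L (S.ideal i) U V hU
  have hd : Disjoint (S.ideal i) (S.ideal j) := S.ideal_indep.pairwiseDisjoint hij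
  have hmem : ⁅U, V⁆ ∈ (⊥ : LieIdeal ℂ L) := by
    rw [← disjoint_iff.mp hd]
    exact (LieSubmodule.mem_inf _ _ _).mpr ⟨h2, h1⟩
  simpa using hmem

lemma G_bracket_ideal {i j k : Fin S.s} (h : ¬(i = j ∧ i = k)) {U V W : L}
    (hU : U ∈ S.ideal i) (hV : V ∈ S.ideal j) (hW : W ∈ S.ideal k) :
    S.G ⁅U, V⁆ W = 0 := by
  by_cases hij : i = j
  · subst hij
    have hik : i ≠ k := fun hc => h ⟨rfl, hc⟩
    have : ⁅U, V⁆ ∈ S.ideal i := (S.ideal i).lie_mem hV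
    exact S.G_ideal_ne i k hik _ this W hW
  · rw [S.bracket_ideal_zero hij hU hV]
    simp

lemma killing_cyc (U V W : L) :
    killingForm ℂ L ⁅U, V⁆ W = killingForm ℂ L ⁅V, W⁆ U := by
  rw [LieModule.traceForm_apply_lie_apply]
  exact LieModule.traceForm_comm ℂ L L U ⁅V, W⁆

lemma main_calc {γ ε β : R} (hγ : γ ∈ S.Δ) (hε : ε ∈ S.Δ) (hβ : β ∈ S.Δ)
    (hsum : γ + ε + β = 0) (i : Fin S.s)
    (hiγ : S.idealOf γ = i) (hiε : S.idealOf ε = i) (hiβ : S.idealOf β = i)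
    {X Y Z : L} (hX : X ∈ S.rootSpace γ) (hY : Y ∈ S.rootSpace ε) (hZ : Z ∈ S.rootSpace β)
    (eγ eε eβ : ℂ) (hJX : S.J X = eγ • X) (hJY : S.J Y = eε • Y) (hJZ : S.J Z = eβ • Z)
    (hc : (S.c β : ℂ) + S.c ε - S.c γ - eγ * eε * S.c β - eβ * eγ * S.c ε
      - eε * eβ * S.c γ = 0) :
    S.Phi X Y Z = 0 := by
  have hγε : γ + ε = -β := eq_neg_of_add_eq_zero_left hsum
  have hβγ : β + γ = -ε := by
    apply eq_neg_of_add_eq_zero_left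
    rw [← hsum]; abel
  have hεβ : ε + β = -γ := by
    apply eq_neg_of_add_eq_zero_left
    rw [← hsum]; abel
  have hnβ : -β ∈ S.Δ := S.neg_mem β hβ
  have hnε : -ε ∈ S.Δ := S.neg_mem ε hε
  have hnγ : -γ ∈ S.Δ := S.neg_mem γ hγ
  -- memberships of brackets
  have m1 : ⁅X, Y⁆ ∈ S.rootSpace (-β) := hγε ▸ S.bracket_mem γ ε X hX Y hY
  have m2 : ⁅Z, X⁆ ∈ S.rootSpace (-ε) := hβγ ▸ S.bracket_mem β γ Z hZ X hX
  have m3 : ⁅Y, Z⁆ ∈ S.rootSpace (-γ) := hεβ ▸ S.bracket_mem ε β Y hY Z hZ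
  have hZ' : Z ∈ S.rootSpace (- -β) := by rwa [neg_neg]
  have hY' : Y ∈ S.rootSpace (- -ε) := by rwa [neg_neg]
  have hX' : X ∈ S.rootSpace (- -γ) := by rwa [neg_neg]
  -- the three G-values
  have e1 : S.G ⁅X, Y⁆ Z
      = -(S.lam i : ℂ) * (S.c β : ℂ) * killingForm ℂ L ⁅X, Y⁆ Z := by
    rw [S.G_root (-β) hnβ _ m1 Z hZ', S.idealOf_neg, hiβ, S.c_neg]
  have e2 : S.G ⁅Z, X⁆ Y
      = -(S.lam i : ℂ) * (S.c ε : ℂ) * killingForm ℂ L ⁅X, Y⁆ Z := by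
    rw [S.G_root (-ε) hnε _ m2 Y hY', S.idealOf_neg, hiε, S.c_neg,
      killing_cyc Z X Y]
  have e3 : S.G ⁅Y, Z⁆ X
      = -(S.lam i : ℂ) * (S.c γ : ℂ) * killingForm ℂ L ⁅X, Y⁆ Z := by
    rw [S.G_root (-γ) hnγ _ m3 X hX', S.idealOf_neg, hiγ, S.c_neg,
      killing_cyc Y Z X, killing_cyc Z X Y]
  rw [SamelsonSetup.Phi, hJX, hJY, hJZ]
  simp only [smul_lie, lie_smul, map_smul, LinearMap.smul_apply, smul_eq_mul, smul_smul]
  rw [e1, e2, e3]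
  linear_combination (1 / 2 * (-(S.lam i : ℂ)) * killingForm ℂ L ⁅X, Y⁆ Z) * hc

lemma Phi_H {ε : R} (hε : ε ∈ S.Δ) {X Y Z : L}
    (hX : X ∈ S.rootSpace (-ε)) (hY : Y ∈ S.rootSpace ε) (hZ : Z ∈ S.H) :
    S.Phi X Y Z = 0 := by
  have hnε : -ε ∈ S.Δ := S.neg_mem ε hε
  obtain ⟨e, he, hJX, hJY⟩ : ∃ e : ℂ, e * e = -1 ∧ S.J X = (-e) • X ∧ S.J Y = e • Y := by
    rcases S.pos_or_neg ε hε with h | h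
    · refine ⟨Complex.I, by simp [Complex.I_mul_I], ?_, S.J_pos ε h Y hY⟩
      rw [S.J_neg ε h X hX, neg_smul]
    · refine ⟨-Complex.I, by simp [Complex.I_mul_I], ?_, ?_⟩
      · rw [S.J_pos (-ε) h X hX, neg_neg]
      · rw [S.J_neg (-ε) h Y (by rwa [neg_neg]), neg_smul]
  have hZ0 : Z ∈ S.rootSpace 0 := by rw [S.rootSpace_zero]; exact hZ
  have hJZ0 : S.J Z ∈ S.rootSpace 0 := by
    rw [S.rootSpace_zero]; exact S.J_H Z hZ
  have m2 : ⁅Z, X⁆ ∈ S.rootSpace (-ε) := by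
    have := S.bracket_mem 0 (-ε) Z hZ0 X hX; rwa [zero_add] at this
  have m2' : ⁅S.J Z, X⁆ ∈ S.rootSpace (-ε) := by
    have := S.bracket_mem 0 (-ε) _ hJZ0 X hX; rwa [zero_add] at this
  have m3 : ⁅Y, Z⁆ ∈ S.rootSpace ε := by
    have := S.bracket_mem ε 0 Y hY Z hZ0; rwa [add_zero] at this
  have m3' : ⁅Y, S.J Z⁆ ∈ S.rootSpace ε := by
    have := S.bracket_mem ε 0 Y hY _ hJZ0; rwa [add_zero] at this
  have hY' : Y ∈ S.rootSpace (- -ε) := by rwa [neg_neg]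
  have e2 : S.G ⁅Z, X⁆ Y
      = -(S.lam (S.idealOf ε) : ℂ) * (S.c ε : ℂ) * killingForm ℂ L ⁅Z, X⁆ Y := by
    rw [S.G_root (-ε) hnε _ m2 Y hY', S.idealOf_neg, S.c_neg]
  have e3 : S.G ⁅Y, Z⁆ X
      = -(S.lam (S.idealOf ε) : ℂ) * (S.c ε : ℂ) * killingForm ℂ L ⁅Z, X⁆ Y := by
    rw [S.G_root ε hε _ m3 X hX, killing_cyc Y Z X]
  have e5 : S.G ⁅S.J Z, X⁆ Y
      = -(S.lam (S.idealOf ε) : ℂ) * (S.c ε : ℂ) * killingForm ℂ L ⁅S.J Z, X⁆ Y := by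
    rw [S.G_root (-ε) hnε _ m2' Y hY', S.idealOf_neg, S.c_neg]
  have e6 : S.G ⁅Y, S.J Z⁆ X
      = -(S.lam (S.idealOf ε) : ℂ) * (S.c ε : ℂ) * killingForm ℂ L ⁅S.J Z, X⁆ Y := by
    rw [S.G_root ε hε _ m3' X hX, killing_cyc Y (S.J Z) X]
  rw [SamelsonSetup.Phi, hJX, hJY]
  simp only [smul_lie, lie_smul, map_smul, LinearMap.smul_apply, smul_eq_mul, smul_smul]
  rw [e2, e3, e5, e6]
  linear_combination (1 / 2 * S.G ⁅X, Y⁆ Z) * he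

lemma Phi_ideal {γ ε β : R} (hγ : γ ∈ S.Δ) (hε : ε ∈ S.Δ) (hβ : β ∈ S.Δ)
    (h : ¬(S.idealOf γ = S.idealOf ε ∧ S.idealOf β = S.idealOf ε))
    {X Y Z : L} (hX : X ∈ S.rootSpace γ) (hY : Y ∈ S.rootSpace ε) (hZ : Z ∈ S.rootSpace β) :
    S.Phi X Y Z = 0 := by
  have iX : X ∈ S.ideal (S.idealOf γ) := S.rootSpace_le_ideal γ hγ X hX
  have iY : Y ∈ S.ideal (S.idealOf ε) := S.rootSpace_le_ideal ε hε Y hY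
  have iZ : Z ∈ S.ideal (S.idealOf β) := S.rootSpace_le_ideal β hβ Z hZ
  have iJX : S.J X ∈ S.ideal (S.idealOf γ) := S.rootSpace_le_ideal γ hγ _ (S.J_mem hX)
  have iJY : S.J Y ∈ S.ideal (S.idealOf ε) := S.rootSpace_le_ideal ε hε _ (S.J_mem hY)
  have iJZ : S.J Z ∈ S.ideal (S.idealOf β) := S.rootSpace_le_ideal β hβ _ (S.J_mem hZ)
  have h1 : ¬(S.idealOf γ = S.idealOf ε ∧ S.idealOf γ = S.idealOf β) := by
    rintro ⟨a, b⟩; exact h ⟨a, b.symm.trans a⟩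
  have h2 : ¬(S.idealOf β = S.idealOf γ ∧ S.idealOf β = S.idealOf ε) := by
    rintro ⟨a, b⟩; exact h ⟨a.symm.trans b, b⟩
  have h3 : ¬(S.idealOf ε = S.idealOf β ∧ S.idealOf ε = S.idealOf γ) := by
    rintro ⟨a, b⟩; exact h ⟨b.symm, a.symm⟩
  rw [SamelsonSetup.Phi,
    S.G_bracket_ideal h1 iX iY iZ, S.G_bracket_ideal h2 iZ iX iY,
    S.G_bracket_ideal h3 iY iZ iX, S.G_bracket_ideal h1 iJX iJY iZ,
    S.G_bracket_ideal h2 iJZ iJX iY, S.G_bracket_ideal h3 iJY iJZ iX]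
  ring

lemma Phi_core
    (hpluri : ∀ a ∈ S.pos, ∀ b ∈ S.pos, a + b ∈ S.pos → S.c (a + b) = S.c a + S.c b - 1)
    {α : R} (hα : α ∈ S.pos) (hImax : S.Imax α)
    {ε γ β : R} (hεα : ε = α ∨ ε = -α)
    (hγ : γ ∈ insert (0 : R) S.Δ) (hβ : β ∈ insert (0 : R) S.Δ)
    (hβ1 : β ≠ α) (hβ2 : β ≠ -α)
    {X Y Z : L} (hX : X ∈ S.rootSpace γ) (hY : Y ∈ S.rootSpace ε) (hZ : Z ∈ S.rootSpace β) :
    S.Phi X Y Z = 0 := by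
  have hαΔ : α ∈ S.Δ := S.pos_subset hα
  have hcα : S.c α = 1 := S.c_one hpluri _ α hα rfl hImax
  have hcαC : (S.c α : ℂ) = 1 := by exact_mod_cast hcα
  have jp : ∀ {a : R}, a ∈ S.pos → ∀ {U : L}, U ∈ S.rootSpace a →
      S.J U = Complex.I • U := fun h _ hU => S.J_pos _ h _ hU
  have jn : ∀ {a : R}, -a ∈ S.pos → ∀ {U : L}, U ∈ S.rootSpace a →
      S.J U = (-Complex.I) • U := by
    intro a h U hU
    rw [S.J_neg (-a) h U (by rwa [neg_neg]), neg_smul]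
  by_cases hsum : γ + ε + β = 0
  · rcases Set.mem_insert_iff.mp hβ with hβ0 | hβΔ
    · -- Z ∈ 𝔥
      subst hβ0
      have hεΔ : ε ∈ S.Δ := by
        rcases hεα with rfl | rfl
        · exact hαΔ
        · exact S.neg_mem α hαΔ
      have hγε : γ = -ε := by
        have h0 : γ - -ε = γ + ε + 0 := by abel
        rw [hsum] at h0
        exact eq_of_sub_eq_zero h0
      have hZ' : Z ∈ S.H := by
        have := S.rootSpace_zero ▸ hZ
        exact this
      exact S.Phi_H hεΔ (hγε ▸ hX) hY hZ'
    · -- Z in a root space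
      have hγΔ : γ ∈ S.Δ := by
        rcases Set.mem_insert_iff.mp hγ with hγ0 | h
        · exfalso
          subst hγ0
          have hβε : β = -ε := by
            have h0 : β - -ε = 0 + ε + β := by abel
            rw [hsum] at h0
            exact eq_of_sub_eq_zero h0
          rcases hεα with rfl | rfl
          · exact hβ2 hβε
          · rw [neg_neg] at hβε; exact hβ1 hβε
        · exact h
      have hεΔ : ε ∈ S.Δ := by
        rcases hεα with rfl | rfl
        · exact hαΔ
        · exact S.neg_mem α hαΔ
      by_cases hid : S.idealOf γ = S.idealOf ε ∧ S.idealOf β = S.idealOf ε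
      · rcases hεα with h | h
        · -- ε = α
          rw [eq_comm] at h
          subst h
          rcases S.pos_or_neg γ hγΔ with hγp | hγn <;>
            rcases S.pos_or_neg β hβΔ with hβp | hβn
          · exact absurd hsum (S.no_three hγp hα hβp)
          · -- γ pos, β neg
            have hba : -β = γ + α := neg_eq_of_add_eq_zero_left hsum
            have hab : γ + α ∈ S.pos := hba ▸ hβn
            have hcc : S.c β = S.c γ := by
              have h1 : S.c (γ + α) = S.c γ + S.c α - 1 := hpluri γ hγp α hα hab
              rw [← S.c_neg β, hba, h1, hcα]; ring
            have hccC : (S.c β : ℂ) = (S.c γ : ℂ) := by exact_mod_cast hcc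
            refine S.main_calc hγΔ hαΔ hβΔ hsum _ hid.1 rfl hid.2 hX hY hZ
              Complex.I Complex.I (-Complex.I) (jp hγp hX) (jp hα hY) (jn hβn hZ) ?_
            linear_combination 2 * hccC +
              (-(S.c β : ℂ) + (S.c α : ℂ) + (S.c γ : ℂ)) * Complex.I_mul_I
          · -- γ neg, β pos
            refine S.main_calc hγΔ hαΔ hβΔ hsum _ hid.1 rfl hid.2 hX hY hZ
              (-Complex.I) Complex.I Complex.I (jn hγn hX) (jp hα hY) (jp hβp hZ) ?_
            linear_combination ((S.c β : ℂ) + (S.c α : ℂ) - (S.c γ : ℂ)) * Complex.I_mul_I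
          · -- γ neg, β neg
            have hαd : α = -γ + -β := by
              have h0 : α - (-γ + -β) = γ + α + β := by abel
              rw [hsum] at h0
              exact eq_of_sub_eq_zero h0
            have hab : -γ + -β ∈ S.pos := hαd ▸ hα
            have hIm : S.Imax (-γ + -β) := hαd ▸ hImax
            have hγ1 : S.c γ = 1 := by
              rw [← S.c_neg γ]
              exact S.c_one hpluri _ (-γ) hγn rfl (S.Imax_left hγn hβn hab hIm)
            have hγ1C : (S.c γ : ℂ) = 1 := by exact_mod_cast hγ1
            refine S.main_calc hγΔ hαΔ hβΔ hsum _ hid.1 rfl hid.2 hX hY hZ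
              (-Complex.I) Complex.I (-Complex.I) (jn hγn hX) (jp hα hY) (jn hβn hZ) ?_
            linear_combination 2 * hcαC - 2 * hγ1C +
              ((S.c β : ℂ) - (S.c α : ℂ) + (S.c γ : ℂ)) * Complex.I_mul_I
        · -- ε = -α
          subst h
          have hnα : - -α ∈ S.pos := by rwa [neg_neg]
          have hcnαC : (S.c (-α) : ℂ) = 1 := by
            rw [S.c_neg]; exact hcαC
          rcases S.pos_or_neg γ hγΔ with hγp | hγn <;>
            rcases S.pos_or_neg β hβΔ with hβp | hβn
          · -- γ pos, β pos
            have hαd : α = γ + β := by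
              have h0 : α - (γ + β) = -(γ + -α + β) := by abel
              rw [hsum, neg_zero] at h0
              exact eq_of_sub_eq_zero h0
            have hab : γ + β ∈ S.pos := hαd ▸ hα
            have hIm : S.Imax (γ + β) := hαd ▸ hImax
            have hγ1 : S.c γ = 1 := S.c_one hpluri _ γ hγp rfl (S.Imax_left hγp hβp hab hIm)
            have hγ1C : (S.c γ : ℂ) = 1 := by exact_mod_cast hγ1
            refine S.main_calc hγΔ hεΔ hβΔ hsum _ hid.1 rfl hid.2 hX hY hZ
              Complex.I (-Complex.I) Complex.I (jp hγp hX) (jn hnα hY) (jp hβp hZ) ?_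
            linear_combination 2 * hcnαC - 2 * hγ1C +
              ((S.c β : ℂ) - (S.c (-α) : ℂ) + (S.c γ : ℂ)) * Complex.I_mul_I
          · -- γ pos, β neg
            refine S.main_calc hγΔ hεΔ hβΔ hsum _ hid.1 rfl hid.2 hX hY hZ
              Complex.I (-Complex.I) (-Complex.I) (jp hγp hX) (jn hnα hY) (jn hβn hZ) ?_
            linear_combination ((S.c β : ℂ) + (S.c (-α) : ℂ) - (S.c γ : ℂ)) * Complex.I_mul_I
          · -- γ neg, β pos
            have hbd : β = α + -γ := by
              have h0 : β - (α + -γ) = γ + -α + β := by abel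
              rw [hsum] at h0
              exact eq_of_sub_eq_zero h0
            have hab : α + -γ ∈ S.pos := hbd ▸ hβp
            have hcc : S.c β = S.c γ := by
              have h1 : S.c (α + -γ) = S.c α + S.c (-γ) - 1 := hpluri α hα (-γ) hγn hab
              rw [hbd, h1, hcα, S.c_neg]; ring
            have hccC : (S.c β : ℂ) = (S.c γ : ℂ) := by exact_mod_cast hcc
            refine S.main_calc hγΔ hεΔ hβΔ hsum _ hid.1 rfl hid.2 hX hY hZ
              (-Complex.I) (-Complex.I) Complex.I (jn hγn hX) (jn hnα hY) (jp hβp hZ) ?_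
            linear_combination 2 * hccC +
              (-(S.c β : ℂ) + (S.c (-α) : ℂ) + (S.c γ : ℂ)) * Complex.I_mul_I
          · -- γ neg, β neg
            exfalso
            have h0 : -γ + α + -β = -(γ + -α + β) := by abel
            rw [hsum, neg_zero] at h0
            exact S.no_three hγn hα hβn h0
      · exact S.Phi_ideal hγΔ hεΔ hβΔ hid hX hY hZ
  · exact S.Phi_zero_of_ne hsum hX hY hZ

theorem holonomy_splitting_Imax' (S : SamelsonSetup R L)
    (hpluri : ∀ a ∈ S.pos, ∀ b ∈ S.pos, a + b ∈ S.pos → S.c (a + b) = S.c a + S.c b - 1)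
    (α : R) (hα : α ∈ S.pos)
    (hαImax : ∀ j, S.coeff α j ≠ 0 → S.c (S.simple j) = 1)
    (X Y Z : L) (hY : Y ∈ S.rootSpace α ⊔ S.rootSpace (-α))
    (hZ : Z ∈ S.H ∨ ∃ β ∈ S.Δ, β ≠ α ∧ β ≠ -α ∧ Z ∈ S.rootSpace β) :
    S.Phi X Y Z = 0 := by
  have hImax : S.Imax α := hαImax
  have hαΔ : α ∈ S.Δ := S.pos_subset hα
  have hα0 : α ≠ 0 := fun h => S.zero_not_mem (h ▸ hαΔ)
  obtain ⟨β, hβins, hβ1, hβ2, hZr⟩ :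
      ∃ β ∈ insert (0 : R) S.Δ, β ≠ α ∧ β ≠ -α ∧ Z ∈ S.rootSpace β := by
    rcases hZ with hZH | ⟨β, hβΔ, hβ1, hβ2, hZr⟩
    · refine ⟨0, Set.mem_insert _ _, fun h => hα0 h.symm, ?_, ?_⟩
      · intro h
        exact hα0 (by rw [← neg_neg α, ← h, neg_zero])
      · rw [S.rootSpace_zero]; exact hZH
    · exact ⟨β, Set.mem_insert_of_mem _ hβΔ, hβ1, hβ2, hZr⟩
  have key : ∀ (ε : R), (ε = α ∨ ε = -α) → ∀ Y' ∈ S.rootSpace ε, ∀ X' : L,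
      S.Phi X' Y' Z = 0 := by
    intro ε hεor Y' hY' X'
    have htop : (⨆ a : ↥(insert (0 : R) S.Δ), S.rootSpace a.1) = ⊤ := by
      rw [iSup_subtype'' (insert (0 : R) S.Δ) S.rootSpace]
      exact S.rootSpace_sup
    have hX' : X' ∈ ⨆ a : ↥(insert (0 : R) S.Δ), S.rootSpace a.1 :=
      htop ▸ Submodule.mem_top
    refine Submodule.iSup_induction (motive := fun W => S.Phi W Y' Z = 0) _ hX' ?_ ?_ ?_
    · rintro ⟨γ, hγ⟩ W hW
      exact S.Phi_core hpluri hα hImax hεor hγ hβins hβ1 hβ2 hW hY' hZr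
    · exact S.Phi_zero_left Y' Z
    · intro a b ha hb
      rw [S.Phi_add_left, ha, hb, add_zero]
  obtain ⟨y1, hy1, y2, hy2, rfl⟩ := Submodule.mem_sup.mp hY
  rw [S.Phi_add_mid, key α (Or.inl rfl) y1 hy1 X, key (-α) (Or.inr rfl) y2 hy2 X, add_zero]

end SamelsonSetup


/-- Assume the constants are pluriclosed. For every positive root α that is an
ℕ-linear combination of simple roots αⱼ with c_{αⱼ} = 1 (i.e. α ∈ Δ_{I_max}), every X ∈ 𝔤,
every Y ∈ 𝔤_α ⊕ 𝔤_{−α}, and every Z lying either in 𝔥 or in a root space 𝔤_β with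
β ∈ Δ \ {α, −α}, one has Φ(X, Y, Z) = 0.  This gives the Bismut holonomy splitting
𝔤 = 𝔱 ⊕ ⨁_{α ∈ Δ_{I_max}} 𝔤_α^ℝ ⊕ (Σ_{α ∈ Δ⁺ \ Δ_{I_max}} 𝔤_α^ℝ). -/
theorem holonomy_splitting_Imax {R L : Type} [AddCommGroup R] [LieRing L] [LieAlgebra ℂ L]
    (S : SamelsonSetup R L)
    (hpluri : ∀ a ∈ S.pos, ∀ b ∈ S.pos, a + b ∈ S.pos → S.c (a + b) = S.c a + S.c b - 1)
    (α : R) (hα : α ∈ S.pos)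
    (hαImax : ∀ j, S.coeff α j ≠ 0 → S.c (S.simple j) = 1)
    (X Y Z : L) (hY : Y ∈ S.rootSpace α ⊔ S.rootSpace (-α))
    (hZ : Z ∈ S.H ∨ ∃ β ∈ S.Δ, β ≠ α ∧ β ≠ -α ∧ Z ∈ S.rootSpace β) :
    S.Phi X Y Z = 0 := by
  exact SamelsonSetup.holonomy_splitting_Imax' S hpluri α hα hαImax X Y Z hY hZ
end

section
/- In the Samelson setup, assume the constants are pluriclosed, i.e. c_{α+β} = c_α + c_β − 1 for all α, β ∈ Δ⁺ with α + β ∈ Δ⁺. Let Δ_{I_max} denote the set of positive roots that are ℕ-linear combinations of simple roots αⱼ with c_{αⱼ} = 1. Then c_α = 1 for every α ∈ Δ_{I_max}. -/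
/-- Abstract data of the root system of a finite-dimensional complex semisimple Lie algebra
relative to a Cartan subalgebra: the set of roots `Δ` inside the weight lattice (an additive
group `R`), a fixed choice of positive roots `pos`, the corresponding simple roots
`simple 1, …, simple r`, and the (unique) expression of every positive root as an ℕ-linear
combination of simple roots, recorded by `coeff`.  The field `descent` records the standard
root-system fact that every non-simple positive root is a simple root plus a positive root. -/
structure RootData (R : Type) [AddCommGroup R] where
  /-- the root system Δ -/
  Δ : Set R
  /-- the positive roots Δ⁺ -/
  pos : Set R
  Δ_finite : Δ.Finite
  pos_subset : pos ⊆ Δ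
  zero_not_mem : (0 : R) ∉ Δ
  neg_mem : ∀ a ∈ Δ, -a ∈ Δ
  pos_or_neg : ∀ a ∈ Δ, a ∈ pos ∨ -a ∈ pos
  not_pos_and_neg : ∀ a ∈ pos, -a ∉ pos
  /-- the number of simple roots (= rank) -/
  r : ℕ
  /-- the simple roots α₁, …, α_r -/
  simple : Fin r → R
  simple_mem : ∀ j, simple j ∈ pos
  /-- the coefficients of a positive root as an ℕ-linear combination of simple roots -/
  coeff : R → Fin r → ℕ
  coeff_spec : ∀ a ∈ pos, a = ∑ j, coeff a j • simple j
  coeff_unique : ∀ a ∈ pos, ∀ k : Fin r → ℕ, a = ∑ j, k j • simple j → k = coeff a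
  descent : ∀ a ∈ pos, (∀ j, a ≠ simple j) → ∃ j, ∃ b ∈ pos, a = simple j + b

/-- If the positive constants c_α are pluriclosed, i.e.
c_{α+β} = c_α + c_β − 1 for all α, β ∈ Δ⁺ with α + β ∈ Δ⁺, then c_α = 1 for every
positive root α that is an ℕ-linear combination of simple roots αⱼ with c_{αⱼ} = 1. -/
theorem c_eq_one_on_Imax {R : Type} [AddCommGroup R] (D : RootData R)
    (c : R → ℝ) (hc : ∀ a ∈ D.pos, 0 < c a)
    (hpluri : ∀ a ∈ D.pos, ∀ b ∈ D.pos, a + b ∈ D.pos → c (a + b) = c a + c b - 1)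
    (α : R) (hα : α ∈ D.pos) (hImax : ∀ j, D.coeff α j ≠ 0 → c (D.simple j) = 1) :
    c α = 1 := by
  suffices H : ∀ n : ℕ, ∀ a ∈ D.pos, (∑ j, D.coeff a j) = n →
      (∀ j, D.coeff a j ≠ 0 → c (D.simple j) = 1) → c a = 1 by
    exact H (∑ j, D.coeff α j) α hα rfl hImax
  intro n
  induction n using Nat.strong_induction_on with
  | _ n IH =>
    intro a ha hsum hI
    by_cases hs : ∃ j, a = D.simple j
    · obtain ⟨j, rfl⟩ := hs
      have hk : (fun i => if i = j then 1 else 0) = D.coeff (D.simple j) := by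
        apply D.coeff_unique _ (D.simple_mem j)
        simp [Finset.sum_ite_eq']
      have : D.coeff (D.simple j) j ≠ 0 := by
        rw [← hk]; simp
      exact hI j this
    · push_neg at hs
      obtain ⟨j, b, hb, hab⟩ := D.descent a ha hs
      have hk : (fun i => (if i = j then 1 else 0) + D.coeff b i) = D.coeff a := by
        apply D.coeff_unique _ ha
        rw [hab]
        simp only [add_smul, Finset.sum_add_distrib, ite_smul, one_smul, zero_smul]
        rw [Finset.sum_ite_eq' Finset.univ j D.simple]
        simp [← D.coeff_spec b hb]
      have hcoeff : ∀ i, D.coeff a i = (if i = j then 1 else 0) + D.coeff b i :=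
        fun i => (congrFun hk i).symm
      have hsum' : (∑ i, D.coeff b i) < n := by
        have : n = ∑ i, ((if i = j then 1 else 0) + D.coeff b i) := by
          rw [← hsum]; exact Finset.sum_congr rfl fun i _ => hcoeff i
        rw [Finset.sum_add_distrib, Finset.sum_ite_eq' Finset.univ j (fun _ => 1)] at this
        simp at this
        omega
      have hb1 : c b = 1 := by
        refine IH _ hsum' b hb rfl fun i hi => hI i ?_
        rw [hcoeff i]; omega
      have hj1 : c (D.simple j) = 1 := by
        refine hI j ?_
        rw [hcoeff j]; simp
      rw [hab, hpluri _ (D.simple_mem j) _ hb (hab ▸ ha), hj1, hb1]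
      ring
end

section
/- In the Samelson setup, let X ∈ 𝔤_α, Y ∈ 𝔤_β, Z ∈ 𝔤_γ where α, β, γ ∈ Δ ∪ {0} (with the convention 𝔤₀ := 𝔥) and α + β + γ ≠ 0. Then the Bismut torsion vanishes: T(X, Y, Z) = 0. -/
lemma SamelsonSetup.J_mem_s9 {R L : Type} [AddCommGroup R] [LieRing L] [LieAlgebra ℂ L]
    (S : SamelsonSetup R L) {a : R} (ha : a ∈ insert (0 : R) S.Δ) {X : L}
    (hX : X ∈ S.rootSpace a) : S.J X ∈ S.rootSpace a := by
  rcases ha with rfl | ha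
  · rw [S.rootSpace_zero] at hX ⊢; exact S.J_H X hX
  · rcases S.pos_or_neg a ha with h | h
    · rw [S.J_pos a h X hX]; exact Submodule.smul_mem _ _ hX
    · have : X ∈ S.rootSpace (-(-a)) := by rwa [neg_neg]
      rw [S.J_neg (-a) h X this]
      exact Submodule.neg_mem _ (Submodule.smul_mem _ _ hX)

lemma SamelsonSetup.G_ne_zero {R L : Type} [AddCommGroup R] [LieRing L] [LieAlgebra ℂ L]
    (S : SamelsonSetup R L) {a b : R} (hb : b ∈ insert (0 : R) S.Δ) (hab : a + b ≠ 0)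
    {U V : L} (hU : U ∈ S.rootSpace a) (hV : V ∈ S.rootSpace b) : S.G U V = 0 := by
  by_cases ha0 : a = 0
  · subst ha0
    rcases hb with rfl | hb
    · simp at hab
    · rw [S.rootSpace_zero] at hU
      exact S.G_H_root b hb U hU V hV
  · by_cases haΔ : a ∈ S.Δ
    · rcases hb with rfl | hb
      · rw [S.rootSpace_zero] at hV
        rw [S.G_symm]
        exact S.G_H_root a haΔ V hV U hU
      · exact S.G_roots_ne a haΔ b hb hab U hU V hV
    · rw [S.rootSpace_eq_bot a ha0 haΔ] at hU
      rw [Submodule.mem_bot] at hU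
      subst hU; simp

/-- For X ∈ 𝔤_α, Y ∈ 𝔤_β, Z ∈ 𝔤_γ with α, β, γ ∈ Δ ∪ {0}
(convention 𝔤₀ = 𝔥) and α + β + γ ≠ 0, the Bismut torsion vanishes: T(X,Y,Z) = 0. -/
theorem bismut_torsion_vanishes_of_sum_ne_zero {R L : Type} [AddCommGroup R] [LieRing L]
    [LieAlgebra ℂ L] (S : SamelsonSetup R L) (α β γ : R)
    (hα : α ∈ insert (0 : R) S.Δ) (hβ : β ∈ insert (0 : R) S.Δ)
    (hγ : γ ∈ insert (0 : R) S.Δ) (hsum : α + β + γ ≠ 0)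
    (X Y Z : L) (hX : X ∈ S.rootSpace α) (hY : Y ∈ S.rootSpace β) (hZ : Z ∈ S.rootSpace γ) :
    S.T X Y Z = 0 := by
  have key : ∀ a b g : R, a ∈ insert (0:R) S.Δ → b ∈ insert (0:R) S.Δ →
      g ∈ insert (0:R) S.Δ → a + b + g ≠ 0 →
      ∀ U ∈ S.rootSpace a, ∀ V ∈ S.rootSpace b, ∀ W ∈ S.rootSpace g,
      S.G ⁅S.J U, S.J V⁆ W = 0 := by
    intro a b g ha hb hg hsum U hU V hV W hW
    have hbr : ⁅S.J U, S.J V⁆ ∈ S.rootSpace (a + b) :=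
      S.bracket_mem a b _ (S.J_mem_s9 ha hU) _ (S.J_mem_s9 hb hV)
    exact S.G_ne_zero hg hsum hbr hW
  have h1 := key α β γ hα hβ hγ hsum X hX Y hY Z hZ
  have h2 := key β γ α hβ hγ hα (by rw [show β + γ + α = α + β + γ by abel]; exact hsum)
    Y hY Z hZ X hX
  have h3 := key γ α β hγ hα hβ (by rw [show γ + α + β = α + β + γ by abel]; exact hsum)
    Z hZ X hX Y hY
  simp [SamelsonSetup.T, h1, h2, h3]
end

section
/- In the Samelson setup, let I be a subset of the simple roots, let Δ_I ⊆ Δ⁺ be the set of positive roots supported on I, and set 𝔥_I := 𝔥 ⊕ ⨁_{α ∈ Δ_I} (𝔤_α ⊕ 𝔤_{−α}) and 𝔭 := ⨁_{α ∈ Δ⁺ \ Δ_I} (𝔤_α ⊕ 𝔤_{−α}). Then the Bismut torsion satisfies T(X, JY, JZ) = T(X, Y, Z) for all X ∈ 𝔥_I and Y, Z ∈ 𝔭. (This is the algebraic claim showing that the complex structure projects to the base of the submersion G → G/H_I.) -/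
namespace SamelsonSetup

variable {R L : Type} [AddCommGroup R] [LieRing L] [LieAlgebra ℂ L]

/-- The set Δ_I of positive roots supported on a set `I` of simple roots. -/
def DeltaI (S : SamelsonSetup R L) (I : Set (Fin S.r)) : Set R :=
  {a | a ∈ S.pos ∧ ∀ j ∉ I, S.coeff a j = 0}

/-- The subalgebra 𝔥_I = 𝔥 ⊕ ⨁_{α ∈ Δ_I} (𝔤_α ⊕ 𝔤_{−α}), as a subspace of 𝔤. -/
def hI (S : SamelsonSetup R L) (I : Set (Fin S.r)) : Submodule ℂ L :=
  S.H.toSubmodule ⊔ ⨆ a ∈ S.DeltaI I, (S.rootSpace a ⊔ S.rootSpace (-a))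

/-- The complement 𝔭 = ⨁_{α ∈ Δ⁺ \ Δ_I} (𝔤_α ⊕ 𝔤_{−α}), as a subspace of 𝔤. -/
def pI (S : SamelsonSetup R L) (I : Set (Fin S.r)) : Submodule ℂ L :=
  ⨆ a ∈ S.pos \ S.DeltaI I, (S.rootSpace a ⊔ S.rootSpace (-a))

end SamelsonSetup


namespace SamelsonSetup

variable {R L : Type} [AddCommGroup R] [LieRing L] [LieAlgebra ℂ L]

/-- ℕ-linear independence of the simple roots, from uniqueness of coefficients. -/
lemma nat_comb_eq_zero (S : SamelsonSetup R L) (m : Fin S.r → ℕ)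
    (h : ∑ j, m j • S.simple j = 0) : ∀ j, m j = 0 := by
  classical
  intro j0
  set e : Fin S.r → ℕ := fun j => if j = j0 then 1 else 0 with he
  have h1 : S.simple j0 = ∑ j, e j • S.simple j := by
    simp [he, ite_smul]
  have h2 : S.simple j0 = ∑ j, (e j + m j) • S.simple j := by
    have : ∑ j, (e j + m j) • S.simple j
        = (∑ j, e j • S.simple j) + ∑ j, m j • S.simple j := by
      rw [← Finset.sum_add_distrib]
      exact Finset.sum_congr rfl fun j _ => add_smul _ _ _
    rw [this, ← h1, h, add_zero]
  have hc1 := S.coeff_unique _ (S.simple_mem j0) e h1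
  have hc2 := S.coeff_unique _ (S.simple_mem j0) (fun j => e j + m j) h2
  have := congrFun (hc2.trans hc1.symm) j0
  omega

lemma comb_two (S : SamelsonSetup R L) {a b : R} (ha : a ∈ S.pos) (hb : b ∈ S.pos) :
    a + b = ∑ j, (S.coeff a j + S.coeff b j) • S.simple j := by
  conv_lhs => rw [S.coeff_spec a ha, S.coeff_spec b hb]
  rw [← Finset.sum_add_distrib]
  exact Finset.sum_congr rfl fun j _ => (add_smul _ _ _).symm

lemma sum_two_ne (S : SamelsonSetup R L) {a b : R} (ha : a ∈ S.pos) (hb : b ∈ S.pos) :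
    a + b ≠ 0 := by
  intro h
  have h2 : ∑ j, (S.coeff a j + S.coeff b j) • S.simple j = 0 := by
    rw [← S.comb_two ha hb]; exact h
  have h3 := S.nat_comb_eq_zero _ h2
  have ha0 : a = 0 := by
    rw [S.coeff_spec a ha]
    exact Finset.sum_eq_zero fun j _ => by
      have := h3 j
      have : S.coeff a j = 0 := by omega
      simp [this]
  exact S.zero_not_mem (ha0 ▸ S.pos_subset ha)

lemma sum_three_ne (S : SamelsonSetup R L) {a b c : R} (ha : a ∈ S.pos) (hb : b ∈ S.pos)
    (hc : c ∈ S.pos) : a + b + c ≠ 0 := by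
  intro h
  have hcomb : a + (b + c) = ∑ j, (S.coeff a j + (S.coeff b j + S.coeff c j)) • S.simple j := by
    conv_lhs => rw [S.coeff_spec a ha, S.comb_two hb hc]
    rw [← Finset.sum_add_distrib]
    exact Finset.sum_congr rfl fun j _ => (add_smul _ _ _).symm
  have h2 : ∑ j, (S.coeff a j + (S.coeff b j + S.coeff c j)) • S.simple j = 0 := by
    rw [← hcomb, ← add_assoc]; exact h
  have h3 := S.nat_comb_eq_zero _ h2
  have ha0 : a = 0 := by
    rw [S.coeff_spec a ha]
    exact Finset.sum_eq_zero fun j _ => by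
      have := h3 j
      have : S.coeff a j = 0 := by omega
      simp [this]
  exact S.zero_not_mem (ha0 ▸ S.pos_subset ha)

lemma sum_ne_deltaI (S : SamelsonSetup R L) (I : Set (Fin S.r)) {b c d : R}
    (hb : b ∈ S.pos \ S.DeltaI I) (hc : c ∈ S.pos \ S.DeltaI I) (hd : d ∈ S.DeltaI I) :
    b + c ≠ d := by
  intro h
  have hdpos : d ∈ S.pos := hd.1
  have hcomb : d = ∑ j, (S.coeff b j + S.coeff c j) • S.simple j := by
    rw [← h]; exact S.comb_two hb.1 hc.1
  have hu := S.coeff_unique d hdpos _ hcomb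
  have hbn : ¬(∀ j ∉ I, S.coeff b j = 0) := fun hh => hb.2 ⟨hb.1, hh⟩
  push_neg at hbn
  obtain ⟨j, hjI, hj⟩ := hbn
  have h0 : S.coeff d j = 0 := hd.2 j hjI
  have := congrFun hu j
  omega

/-- The metric pairs root spaces (including 𝔥 = 𝔤₀ and trivial spaces) to zero
unless the roots sum to zero. -/
lemma G_ne (S : SamelsonSetup R L) (a b : R) (hab : a + b ≠ 0) (X Y : L)
    (hX : X ∈ S.rootSpace a) (hY : Y ∈ S.rootSpace b) : S.G X Y = 0 := by
  by_cases ha0 : a = 0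
  · subst ha0
    have hX' : X ∈ S.H := by rwa [S.rootSpace_zero] at hX
    by_cases hb : b ∈ S.Δ
    · exact S.G_H_root b hb X hX' Y hY
    · have hb0 : b ≠ 0 := by simpa using hab
      have : Y = 0 := by
        rw [S.rootSpace_eq_bot b hb0 hb] at hY; simpa using hY
      simp [this]
  · by_cases ha : a ∈ S.Δ
    · by_cases hb0 : b = 0
      · subst hb0
        have hY' : Y ∈ S.H := by rwa [S.rootSpace_zero] at hY
        rw [S.G_symm]
        exact S.G_H_root a ha Y hY' X hX
      · by_cases hb : b ∈ S.Δ
        · exact S.G_roots_ne a ha b hb hab X hX Y hY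
        · have : Y = 0 := by
            rw [S.rootSpace_eq_bot b hb0 hb] at hY; simpa using hY
          simp [this]
    · have : X = 0 := by
        rw [S.rootSpace_eq_bot a ha0 ha] at hX; simpa using hX
      simp [this]

lemma T_add₁ (S : SamelsonSetup R L) (X X' Y Z : L) :
    S.T (X + X') Y Z = S.T X Y Z + S.T X' Y Z := by
  simp only [T, map_add, add_lie, lie_add, LinearMap.add_apply]
  ring

lemma T_add₂ (S : SamelsonSetup R L) (X Y Y' Z : L) :
    S.T X (Y + Y') Z = S.T X Y Z + S.T X Y' Z := by
  simp only [T, map_add, add_lie, lie_add, LinearMap.add_apply]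
  ring

lemma T_add₃ (S : SamelsonSetup R L) (X Y Z Z' : L) :
    S.T X Y (Z + Z') = S.T X Y Z + S.T X Y Z' := by
  simp only [T, map_add, add_lie, lie_add, LinearMap.add_apply]
  ring

lemma T_smul₂ (S : SamelsonSetup R L) (t : ℂ) (X Y Z : L) :
    S.T X (t • Y) Z = t * S.T X Y Z := by
  simp only [T, map_smul, smul_lie, lie_smul, LinearMap.smul_apply, smul_eq_mul]
  ring

lemma T_smul₃ (S : SamelsonSetup R L) (t : ℂ) (X Y Z : L) :
    S.T X Y (t • Z) = t * S.T X Y Z := by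
  simp only [T, map_smul, smul_lie, lie_smul, LinearMap.smul_apply, smul_eq_mul]
  ring

lemma T_zero₁ (S : SamelsonSetup R L) (Y Z : L) : S.T 0 Y Z = 0 := by
  simp [T]

lemma T_zero₂ (S : SamelsonSetup R L) (X Z : L) : S.T X 0 Z = 0 := by
  simp [T]

lemma T_zero₃ (S : SamelsonSetup R L) (X Y : L) : S.T X Y 0 = 0 := by
  simp [T]

/-- `J` preserves each root space of a root `a` with `a ∈ pos` or `-a ∈ pos`. -/
lemma J_mem_rootSpace (S : SamelsonSetup R L) (a : R) (ha : a ∈ S.pos ∨ -a ∈ S.pos)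
    (W : L) (hW : W ∈ S.rootSpace a) : S.J W ∈ S.rootSpace a := by
  rcases ha with h | h
  · rw [S.J_pos a h W hW]
    exact Submodule.smul_mem _ _ hW
  · have hW' : W ∈ S.rootSpace (-(-a)) := by rwa [neg_neg]
    rw [S.J_neg (-a) h W hW']
    exact Submodule.neg_mem _ (Submodule.smul_mem _ _ hW)

/-- The torsion vanishes on root-space triples whose roots do not sum to zero (pairwise
sums with the third also nonzero), given that `J` preserves the three root spaces. -/
lemma T_eq_zero (S : SamelsonSetup R L) (d a b : R) (hab : a + b ≠ 0)
    (habd : d + (a + b) ≠ 0) (X Y Z : L)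
    (hX : X ∈ S.rootSpace d) (hJX : S.J X ∈ S.rootSpace d)
    (hY : Y ∈ S.rootSpace a) (hJY : S.J Y ∈ S.rootSpace a)
    (hZ : Z ∈ S.rootSpace b) (hJZ : S.J Z ∈ S.rootSpace b) : S.T X Y Z = 0 := by
  have h1 : S.G ⁅S.J X, S.J Y⁆ Z = 0 :=
    S.G_ne (d + a) b (fun h => habd (by rw [(add_assoc d a b).symm]; exact h))
      _ _ (S.bracket_mem d a _ hJX _ hJY) hZ
  have h2 : S.G ⁅S.J Y, S.J Z⁆ X = 0 :=
    S.G_ne (a + b) d (fun h => habd (by rw [show d + (a + b) = a + b + d from by abel]; exact h))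
      _ _ (S.bracket_mem a b _ hJY _ hJZ) hX
  have h3 : S.G ⁅S.J Z, S.J X⁆ Y = 0 :=
    S.G_ne (b + d) a (fun h => habd (by rw [show d + (a + b) = b + d + a from by abel]; exact h))
      _ _ (S.bracket_mem b d _ hJZ _ hJX) hY
  simp [T, h1, h2, h3]

/-- The elementwise core: `X` in 𝔥 or a root space of `±δ`, `δ ∈ Δ_I`, and `Y`, `Z` in root
spaces of `±β`, `±γ` with `β, γ ∈ Δ⁺ \ Δ_I`. -/
lemma core (S : SamelsonSetup R L) (I : Set (Fin S.r)) (d a b : R)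
    (hd : d = 0 ∨ ∃ δ ∈ S.DeltaI I, d = δ ∨ d = -δ)
    (ha : ∃ β ∈ S.pos \ S.DeltaI I, a = β ∨ a = -β)
    (hb : ∃ γ ∈ S.pos \ S.DeltaI I, b = γ ∨ b = -γ)
    (X Y Z : L) (hX : X ∈ S.rootSpace d) (hJX : S.J X ∈ S.rootSpace d)
    (hY : Y ∈ S.rootSpace a) (hZ : Z ∈ S.rootSpace b) :
    S.T X (S.J Y) (S.J Z) = S.T X Y Z := by
  obtain ⟨β, hβ, haβ⟩ := ha
  obtain ⟨γ, hγ, hbγ⟩ := hb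
  rcases haβ with h | h <;> rw [h] at hY <;> clear h <;>
    rcases hbγ with h | h <;> rw [h] at hZ <;> clear h
  · -- same sign (+,+): both sides vanish
    have hasign : β ∈ S.pos ∨ -β ∈ S.pos := Or.inl hβ.1
    have hbsign : γ ∈ S.pos ∨ -γ ∈ S.pos := Or.inl hγ.1
    have hab : β + γ ≠ 0 := S.sum_two_ne hβ.1 hγ.1
    have habd : d + (β + γ) ≠ 0 := by
      rcases hd with rfl | ⟨δ, hδ, h' | h'⟩
      · simpa using hab
      · rw [h']
        intro h
        rw [← add_assoc] at h
        exact S.sum_three_ne hδ.1 hβ.1 hγ.1 h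
      · rw [h']
        intro h
        exact S.sum_ne_deltaI I hβ hγ hδ (neg_add_eq_zero.mp h).symm
    have hJY := S.J_mem_rootSpace β hasign Y hY
    have hJZ := S.J_mem_rootSpace γ hbsign Z hZ
    have hJJY := S.J_mem_rootSpace β hasign _ hJY
    have hJJZ := S.J_mem_rootSpace γ hbsign _ hJZ
    rw [S.T_eq_zero d β γ hab habd X Y Z hX hJX hY hJY hZ hJZ,
      S.T_eq_zero d β γ hab habd X (S.J Y) (S.J Z) hX hJX hJY hJJY hJZ hJJZ]
  · -- mixed sign (+,-)
    rw [S.J_pos β hβ.1 Y hY, S.J_neg γ hγ.1 Z hZ,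
      show -(Complex.I • Z) = (-Complex.I) • Z from (neg_smul _ _).symm,
      S.T_smul₂, S.T_smul₃]
    linear_combination (-(S.T X Y Z)) * Complex.I_mul_I
  · -- mixed sign (-,+)
    rw [S.J_neg β hβ.1 Y hY, S.J_pos γ hγ.1 Z hZ,
      show -(Complex.I • Y) = (-Complex.I) • Y from (neg_smul _ _).symm,
      S.T_smul₂, S.T_smul₃]
    linear_combination (-(S.T X Y Z)) * Complex.I_mul_I
  · -- same sign (-,-): both sides vanish
    have hasign : -β ∈ S.pos ∨ -(-β) ∈ S.pos := Or.inr (by rw [neg_neg]; exact hβ.1)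
    have hbsign : -γ ∈ S.pos ∨ -(-γ) ∈ S.pos := Or.inr (by rw [neg_neg]; exact hγ.1)
    have hab : -β + -γ ≠ 0 := by
      intro h
      rw [show -β + -γ = -(β + γ) from by abel] at h
      exact S.sum_two_ne hβ.1 hγ.1 (neg_eq_zero.mp h)
    have habd : d + (-β + -γ) ≠ 0 := by
      rcases hd with rfl | ⟨δ, hδ, h' | h'⟩
      · simpa using hab
      · rw [h']
        intro h
        rw [show δ + (-β + -γ) = δ - (β + γ) from by abel] at h
        exact S.sum_ne_deltaI I hβ hγ hδ (sub_eq_zero.mp h).symm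
      · rw [h']
        intro h
        rw [show -δ + (-β + -γ) = -(δ + β + γ) from by abel] at h
        exact S.sum_three_ne hδ.1 hβ.1 hγ.1 (neg_eq_zero.mp h)
    have hJY := S.J_mem_rootSpace (-β) hasign Y hY
    have hJZ := S.J_mem_rootSpace (-γ) hbsign Z hZ
    have hJJY := S.J_mem_rootSpace (-β) hasign _ hJY
    have hJJZ := S.J_mem_rootSpace (-γ) hbsign _ hJZ
    rw [S.T_eq_zero d (-β) (-γ) hab habd X Y Z hX hJX hY hJY hZ hJZ,
      S.T_eq_zero d (-β) (-γ) hab habd X (S.J Y) (S.J Z) hX hJX hJY hJJY hJZ hJJZ]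

/-- Statement for elementwise `X`, but `Y`, `Z` arbitrary in 𝔭. -/
lemma elemX (S : SamelsonSetup R L) (I : Set (Fin S.r)) (d : R)
    (hd : d = 0 ∨ ∃ δ ∈ S.DeltaI I, d = δ ∨ d = -δ)
    (X : L) (hX : X ∈ S.rootSpace d) (hJX : S.J X ∈ S.rootSpace d)
    (Y Z : L) (hY : Y ∈ S.pI I) (hZ : Z ∈ S.pI I) :
    S.T X (S.J Y) (S.J Z) = S.T X Y Z := by
  -- first reduce Y to an element of a single root space
  have key : ∀ a : R, (∃ β ∈ S.pos \ S.DeltaI I, a = β ∨ a = -β) →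
      ∀ y ∈ S.rootSpace a, ∀ z ∈ S.pI I, S.T X (S.J y) (S.J z) = S.T X y z := by
    intro a ha y hy z hz
    have hz' : z ∈ ⨆ b : ↥(S.pos \ S.DeltaI I), (S.rootSpace b.1 ⊔ S.rootSpace (-b.1)) := by
      rw [iSup_subtype'' (S.pos \ S.DeltaI I) (fun t => S.rootSpace t ⊔ S.rootSpace (-t))]
      exact hz
    refine Submodule.iSup_induction (motive := fun z => S.T X (S.J y) (S.J z) = S.T X y z)
      _ hz' ?_ ?_ ?_
    · rintro ⟨b, hbmem⟩ z hzmem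
      rcases Submodule.mem_sup.mp hzmem with ⟨z₁, hz₁, z₂, hz₂, rfl⟩
      simp only [map_add, S.T_add₃]
      rw [S.core I d a b hd ha ⟨b, hbmem, Or.inl rfl⟩ X y z₁ hX hJX hy hz₁,
        S.core I d a (-b) hd ha ⟨b, hbmem, Or.inr rfl⟩ X y z₂ hX hJX hy hz₂]
    · simp [S.T_zero₃]
    · intro z₁ z₂ h1 h2
      simp only [map_add, S.T_add₃]
      rw [h1, h2]
  -- now reduce Y
  have hy' : Y ∈ ⨆ a : ↥(S.pos \ S.DeltaI I), (S.rootSpace a.1 ⊔ S.rootSpace (-a.1)) := by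
    rw [iSup_subtype'' (S.pos \ S.DeltaI I) (fun t => S.rootSpace t ⊔ S.rootSpace (-t))]
    exact hY
  refine Submodule.iSup_induction (motive := fun y => S.T X (S.J y) (S.J Z) = S.T X y Z)
    _ hy' ?_ ?_ ?_
  · rintro ⟨a, hamem⟩ y hymem
    rcases Submodule.mem_sup.mp hymem with ⟨y₁, hy₁, y₂, hy₂, rfl⟩
    simp only [map_add, S.T_add₂]
    rw [key a ⟨a, hamem, Or.inl rfl⟩ y₁ hy₁ Z hZ,
      key (-a) ⟨a, hamem, Or.inr rfl⟩ y₂ hy₂ Z hZ]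
  · simp [S.T_zero₂]
  · intro y₁ y₂ h1 h2
    simp only [map_add, S.T_add₂]
    rw [h1, h2]

end SamelsonSetup

/-- For any subset I of the simple roots, the Bismut torsion satisfies
T(X, JY, JZ) = T(X, Y, Z) for all X ∈ 𝔥_I and Y, Z ∈ 𝔭. -/
theorem bismut_torsion_J_invariant_hI_p_p {R L : Type} [AddCommGroup R] [LieRing L]
    [LieAlgebra ℂ L] (S : SamelsonSetup R L) (I : Set (Fin S.r))
    (X Y Z : L) (hX : X ∈ S.hI I) (hY : Y ∈ S.pI I) (hZ : Z ∈ S.pI I) :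
    S.T X (S.J Y) (S.J Z) = S.T X Y Z := by
  classical
  rcases Submodule.mem_sup.mp hX with ⟨x₁, hx₁, x₂, hx₂, rfl⟩
  rw [S.T_add₁, S.T_add₁,
    S.elemX I 0 (Or.inl rfl) x₁ (by rw [S.rootSpace_zero]; exact hx₁)
      (by rw [S.rootSpace_zero]; exact S.J_H x₁ hx₁) Y Z hY hZ]
  congr 1
  have hx₂' : x₂ ∈ ⨆ a : ↥(S.DeltaI I), (S.rootSpace a.1 ⊔ S.rootSpace (-a.1)) := by
    rw [iSup_subtype'' (S.DeltaI I) (fun t => S.rootSpace t ⊔ S.rootSpace (-t))]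
    exact hx₂
  refine Submodule.iSup_induction (motive := fun x => S.T x (S.J Y) (S.J Z) = S.T x Y Z)
    _ hx₂' ?_ ?_ ?_
  · rintro ⟨d, hdmem⟩ x hxmem
    rcases Submodule.mem_sup.mp hxmem with ⟨w₁, hw₁, w₂, hw₂, rfl⟩
    have hdpos : d ∈ S.pos := hdmem.1
    simp only [S.T_add₁]
    rw [S.elemX I d (Or.inr ⟨d, hdmem, Or.inl rfl⟩) w₁ hw₁
        (S.J_mem_rootSpace d (Or.inl hdpos) w₁ hw₁) Y Z hY hZ,
      S.elemX I (-d) (Or.inr ⟨d, hdmem, Or.inr rfl⟩) w₂ hw₂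
        (S.J_mem_rootSpace (-d) (Or.inr (by rw [neg_neg]; exact hdpos)) w₂ hw₂) Y Z hY hZ]
  · simp [S.T_zero₁]
  · intro w₁ w₂ h1 h2
    simp only [S.T_add₁]
    rw [h1, h2]
end

section
/- Let V be a finite-dimensional real vector space equipped with a symmetric bilinear form g, an endomorphism J with J² = −id and g(JX, JY) = g(X, Y) for all X, Y, a bilinear bracket [·,·] : V × V → V, and a linear family of endomorphisms Λ : V → End(V), written X ↦ Λ_X, such that Λ_X ∘ J = J ∘ Λ_X for all X. Define T(X,Y,Z) := g(Λ_X Y − Λ_Y X − [X,Y], Z) and the Nijenhuis expression N(X,Y) := [X,Y] + J[JX,Y] + J[X,JY] − [JX,JY]. Then for all X, Y, Z ∈ V: g(N(X,Y), Z) = −T(X,Y,Z) + T(X,JY,JZ) + T(JX,Y,JZ) + T(JX,JY,Z). -/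
/-- Let V be a finite-dimensional real vector space with a symmetric bilinear
form g, an endomorphism J with J² = −id and g(JX, JY) = g(X, Y), a bilinear bracket
[·,·] : V × V → V, and a (bi)linear family of endomorphisms Λ : V → End(V) with
Λ_X ∘ J = J ∘ Λ_X.  With T(X,Y,Z) := g(Λ_X Y − Λ_Y X − [X,Y], Z) and
N(X,Y) := [X,Y] + J[JX,Y] + J[X,JY] − [JX,JY], one has
g(N(X,Y), Z) = −T(X,Y,Z) + T(X,JY,JZ) + T(JX,Y,JZ) + T(JX,JY,Z) for all X, Y, Z ∈ V. -/
theorem nijenhuis_from_torsion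
    (V : Type) [AddCommGroup V] [Module ℝ V] [FiniteDimensional ℝ V]
    (g : LinearMap.BilinForm ℝ V) (hg : ∀ X Y : V, g X Y = g Y X)
    (J : V →ₗ[ℝ] V) (hJ : ∀ X : V, J (J X) = -X)
    (hgJ : ∀ X Y : V, g (J X) (J Y) = g X Y)
    (bracket : V →ₗ[ℝ] V →ₗ[ℝ] V)
    (Λ : V →ₗ[ℝ] V →ₗ[ℝ] V) (hΛJ : ∀ X Y : V, Λ X (J Y) = J (Λ X Y))
    (T : V → V → V → ℝ)
    (hT : ∀ X Y Z : V, T X Y Z = g (Λ X Y - Λ Y X - bracket X Y) Z)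
    (N : V → V → V)
    (hN : ∀ X Y : V, N X Y = bracket X Y + J (bracket (J X) Y) + J (bracket X (J Y))
      - bracket (J X) (J Y)) :
    ∀ X Y Z : V, g (N X Y) Z
      = -(T X Y Z) + T X (J Y) (J Z) + T (J X) Y (J Z) + T (J X) (J Y) Z := by
  have key : ∀ u z : V, g (J u) z = - g u (J z) := by
    intro u z
    have := hgJ u (J z)
    rw [hJ] at this
    simp only [map_neg, LinearMap.neg_apply] at this
    linarith
  intro X Y Z
  simp only [hN, hT, hΛJ, map_sub, map_add, LinearMap.sub_apply, LinearMap.add_apply, key, hgJ, hJ, map_neg, LinearMap.neg_apply]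
  ring
end
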